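/- Let P_1, …, P_N be positive definite solutions of the HCREs. Then for every i ∈ {1, …, N}, P̃_i ≥ ∑_{j=1}^N Ã_{ij} P̃_j Ã_{ij}ᵀ + ∑_{j=1}^N l_{ij} P̃_i P_j^{-1} Q P_j^{-1} P̃_i in the Loewner order. -/

import Mathlib

open Matrix Filter

lemma psd_smul' {n : ℕ} {M : Matrix (Fin n) (Fin n) ℝ} (hM : M.PosSemidef) {c : ℝ} (hc : 0 ≤ c) :
    (c • M).PosSemidef := by
  refine ⟨(by rw [Matrix.IsHermitian, conjTranspose_eq_transpose_of_trivial, transpose_smul,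
    ← conjTranspose_eq_transpose_of_trivial, hM.1] : (c • M).IsHermitian), fun x => ?_⟩
  simpa [Finsupp.mul_sum, mul_assoc, mul_left_comm] using mul_nonneg hc (hM.2 x)

lemma pd_smul' {n : ℕ} {M : Matrix (Fin n) (Fin n) ℝ} (hM : M.PosDef) {c : ℝ} (hc : 0 < c) :
    (c • M).PosDef := by
  refine ⟨(by rw [Matrix.IsHermitian, conjTranspose_eq_transpose_of_trivial, transpose_smul,
    ← conjTranspose_eq_transpose_of_trivial, hM.1] : (c • M).IsHermitian), fun x hx => ?_⟩
  simpa [Finsupp.mul_sum, mul_assoc, mul_left_comm] using mul_pos hc (hM.2 hx)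

lemma psd_sum' {n : ℕ} {ι : Type*} (s : Finset ι) (f : ι → Matrix (Fin n) (Fin n) ℝ)
    (hf : ∀ j ∈ s, (f j).PosSemidef) : (∑ j ∈ s, f j).PosSemidef := by
  classical
  induction s using Finset.induction_on with
  | empty => simpa using Matrix.PosSemidef.zero
  | insert _ _ hj ih =>
    rw [Finset.sum_insert hj]
    exact (hf _ (Finset.mem_insert_self _ _)).add
      (ih fun j hjs => hf j (Finset.mem_insert_of_mem hjs))

lemma psd_conj' {n : ℕ} {M : Matrix (Fin n) (Fin n) ℝ} (hM : M.PosSemidef)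
    (B : Matrix (Fin n) (Fin n) ℝ) : (B * M * Bᵀ).PosSemidef := by
  simpa [conjTranspose_eq_transpose_of_trivial] using hM.mul_mul_conjTranspose_same B

/-- For positive definite solutions of the HCREs, one has, in the Loewner
order, `P̃_i ≥ ∑_j Ã_{ij} P̃_j Ã_{ij}ᵀ + ∑_j l_{ij} P̃_i P_j⁻¹ Q P_j⁻¹ P̃_i`. -/
theorem hcre_Ptil_lower_bound
    (n N : ℕ) (hn : 0 < n) (hN : 0 < N)
    (m : Fin N → ℕ) (hm : ∀ i, 0 < m i)
    (A : Matrix (Fin n) (Fin n) ℝ) (hA : IsUnit A.det)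
    (C : ∀ i : Fin N, Matrix (Fin (m i)) (Fin n) ℝ)
    (hObs : (∑ k ∈ Finset.range n, (A ^ k)ᵀ * (∑ i, (C i)ᵀ * C i) * A ^ k).PosDef)
    (Q : Matrix (Fin n) (Fin n) ℝ) (hQ : Q.PosDef)
    (R : ∀ i : Fin N, Matrix (Fin (m i)) (Fin (m i)) ℝ) (hR : ∀ i, (R i).PosDef)
    (L : Matrix (Fin N) (Fin N) ℝ)
    (hLnonneg : ∀ i j, 0 ≤ L i j) (hLrow : ∀ i, ∑ j, L i j = 1)
    (hLprim : ∃ k : ℕ, 0 < k ∧ ∀ i j, 0 < (L ^ k) i j)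
    (P : Fin N → Matrix (Fin n) (Fin n) ℝ) (hPpos : ∀ i, (P i).PosDef)
    (hsol : ∀ i, P i =
      A * (∑ j, (L i j • (P j)⁻¹ + L i j • ((C j)ᵀ * (R j)⁻¹ * C j)))⁻¹ * Aᵀ + Q)
    (Ptil : Fin N → Matrix (Fin n) (Fin n) ℝ)
    (hPtil : ∀ i, Ptil i = (∑ j, L i j • (P j)⁻¹)⁻¹)
    (S : Fin N → Matrix (Fin n) (Fin n) ℝ)
    (hS : ∀ j, S j = ∑ h, L j h • ((C h)ᵀ * (R h)⁻¹ * C h))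
    (Asol : Fin N → Matrix (Fin n) (Fin n) ℝ)
    (hAsol : ∀ j, Asol j = A * ((Ptil j)⁻¹ + S j)⁻¹ * (Ptil j)⁻¹)
    (Atil : Fin N → Fin N → Matrix (Fin n) (Fin n) ℝ)
    (hAtil : ∀ i j, Atil i j = Real.sqrt (L i j) • (Ptil i * (P j)⁻¹ * Asol j)) :
    ∀ i : Fin N,
      (Ptil i - (∑ j, Atil i j * Ptil j * (Atil i j)ᵀ
        + ∑ j, L i j • (Ptil i * (P j)⁻¹ * Q * (P j)⁻¹ * Ptil i))).PosSemidef := by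
  classical
  -- basic symmetry helper
  have symH : ∀ X : Matrix (Fin n) (Fin n) ℝ, X.IsHermitian → Xᵀ = X := fun X hX => by
    rw [← conjTranspose_eq_transpose_of_trivial, hX.eq]
  -- positive definiteness of the weighted sums
  have hSigpos : ∀ i, (∑ j, L i j • (P j)⁻¹).PosDef := by
    intro i
    have hex : ∃ j, 0 < L i j := by
      by_contra h
      push_neg at h
      have h0 : ∑ j, L i j = 0 :=
        Finset.sum_eq_zero fun j _ => le_antisymm (h j) (hLnonneg i j)
      rw [hLrow i] at h0
      norm_num at h0
    obtain ⟨j0, hj0⟩ := hex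
    rw [← Finset.add_sum_erase _ _ (Finset.mem_univ j0)]
    exact (pd_smul' (hPpos j0).inv hj0).add_posSemidef
      (psd_sum' _ _ fun j _ => psd_smul' (hPpos j).inv.posSemidef (hLnonneg i j))
  have hPtilpos : ∀ j, (Ptil j).PosDef := fun j => by rw [hPtil]; exact (hSigpos j).inv
  have hPtilinv : ∀ j, (Ptil j)⁻¹ = ∑ k, L j k • (P k)⁻¹ := fun j => by
    rw [hPtil, Matrix.nonsing_inv_nonsing_inv _ (hSigpos j).det_pos.ne'.isUnit]
  have hSpsd : ∀ j, (S j).PosSemidef := by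
    intro j
    rw [hS]
    refine psd_sum' _ _ fun h _ => psd_smul' ?_ (hLnonneg j h)
    simpa [conjTranspose_eq_transpose_of_trivial] using
      (hR h).inv.posSemidef.conjTranspose_mul_mul_same (C h)
  set K : Fin N → Matrix (Fin n) (Fin n) ℝ := fun j => (Ptil j)⁻¹ + S j with hK
  have hKj : ∀ j, K j = (Ptil j)⁻¹ + S j := fun j => rfl
  have hKpos : ∀ j, (K j).PosDef := fun j => (hPtilpos j).inv.add_posSemidef (hSpsd j)
  -- det units
  have hPdet : ∀ j, IsUnit (P j).det := fun j => (hPpos j).det_pos.ne'.isUnit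
  have hPtildet : ∀ j, IsUnit (Ptil j).det := fun j => (hPtilpos j).det_pos.ne'.isUnit
  have hKdet : ∀ j, IsUnit (K j).det := fun j => (hKpos j).det_pos.ne'.isUnit
  -- symmetry facts
  have symPinv : ∀ j, ((P j)⁻¹)ᵀ = (P j)⁻¹ := fun j => symH _ (hPpos j).inv.isHermitian
  have symPtil : ∀ j, (Ptil j)ᵀ = Ptil j := fun j => symH _ (hPtilpos j).isHermitian
  have symPtilinv : ∀ j, ((Ptil j)⁻¹)ᵀ = (Ptil j)⁻¹ := fun j =>
    symH _ (hPtilpos j).inv.isHermitian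
  have symKinv : ∀ j, ((K j)⁻¹)ᵀ = (K j)⁻¹ := fun j => symH _ (hKpos j).inv.isHermitian
  -- solution rewritten via K
  have hsolK : ∀ j, P j = A * (K j)⁻¹ * Aᵀ + Q := by
    intro j
    have hsum : ∑ k, (L j k • (P k)⁻¹ + L j k • ((C k)ᵀ * (R k)⁻¹ * C k)) = K j := by
      rw [Finset.sum_add_distrib, hKj j, hPtilinv, hS]
    rw [hsol j, hsum]
  have hAsolK : ∀ j, Asol j = A * (K j)⁻¹ * (Ptil j)⁻¹ := fun j => by
    rw [hAsol, ← hKj j]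
  intro i
  -- the conjugating matrices
  set M : Fin N → Matrix (Fin n) (Fin n) ℝ := fun j => Ptil i * (P j)⁻¹ * (A * (K j)⁻¹)
    with hM
  have hMj : ∀ j, M j = Ptil i * (P j)⁻¹ * (A * (K j)⁻¹) := fun j => rfl
  -- transpose of Asol
  have hAsolT : ∀ j, (Asol j)ᵀ = (Ptil j)⁻¹ * ((K j)⁻¹ * Aᵀ) := by
    intro j
    rw [hAsolK, transpose_mul, transpose_mul, symKinv, symPtilinv]
  -- central identity
  have key : ∀ j, P j - Asol j * Ptil j * (Asol j)ᵀ - Q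
      = (A * (K j)⁻¹) * S j * ((K j)⁻¹ * Aᵀ) := by
    intro j
    have h2 : Asol j * Ptil j * (Asol j)ᵀ
        = A * (K j)⁻¹ * ((Ptil j)⁻¹ * ((K j)⁻¹ * Aᵀ)) := by
      rw [hAsolT, hAsolK]
      rw [mul_assoc (A * (K j)⁻¹ * (Ptil j)⁻¹) (Ptil j), mul_assoc (A * (K j)⁻¹)]
      rw [Matrix.nonsing_inv_mul_cancel_left _ _ (hPtildet j)]
    have hS' : S j = K j - (Ptil j)⁻¹ := by rw [hKj j, add_sub_cancel_left]
    have h3 : (A * (K j)⁻¹) * S j * ((K j)⁻¹ * Aᵀ)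
        = A * (K j)⁻¹ * Aᵀ - A * (K j)⁻¹ * ((Ptil j)⁻¹ * ((K j)⁻¹ * Aᵀ)) := by
      rw [hS', mul_sub, sub_mul, mul_assoc (A * (K j)⁻¹) (K j)]
      rw [Matrix.mul_nonsing_inv_cancel_left _ _ (hKdet j)]
      rw [mul_assoc (A * (K j)⁻¹) ((Ptil j)⁻¹), mul_assoc A]
    rw [hsolK j, h2, h3]
    abel
  -- expansion of Ptil i
  have hexpand : Ptil i = ∑ j, L i j • (Ptil i * (P j)⁻¹ * Ptil i) := by
    have h1 : ∑ j, L i j • (Ptil i * (P j)⁻¹ * Ptil i)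
        = Ptil i * (∑ j, L i j • (P j)⁻¹) * Ptil i := by
      rw [Finset.mul_sum, Finset.sum_mul]
      refine Finset.sum_congr rfl fun j _ => ?_
      rw [mul_smul_comm, smul_mul_assoc]
    rw [h1, ← hPtilinv i, Matrix.mul_nonsing_inv _ (hPtildet i), one_mul]
  -- per-term identity
  have hterm : ∀ j, L i j • (Ptil i * (P j)⁻¹ * Ptil i)
      - (Atil i j * Ptil j * (Atil i j)ᵀ
        + L i j • (Ptil i * (P j)⁻¹ * Q * (P j)⁻¹ * Ptil i))
      = L i j • (M j * S j * (M j)ᵀ) := by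
    intro j
    have hBt : (Ptil i * (P j)⁻¹ * Asol j)ᵀ = (Asol j)ᵀ * ((P j)⁻¹ * Ptil i) := by
      rw [transpose_mul, transpose_mul, symPinv, symPtil]
    have hAt : Atil i j * Ptil j * (Atil i j)ᵀ
        = L i j • (Ptil i * (P j)⁻¹ * (Asol j * Ptil j * (Asol j)ᵀ) * ((P j)⁻¹ * Ptil i)) := by
      rw [hAtil i j, transpose_smul, smul_mul_assoc, smul_mul_assoc, mul_smul_comm,
        smul_smul, Real.mul_self_sqrt (hLnonneg i j), hBt]
      congr 1
      noncomm_ring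
    have hMT : (M j)ᵀ = ((K j)⁻¹ * Aᵀ) * ((P j)⁻¹ * Ptil i) := by
      rw [hMj j]
      simp only [transpose_mul, symKinv, symPinv, symPtil]
    rw [hAt, hMT, ← smul_add, ← smul_sub]
    congr 1
    have hconj : ∀ W₁ W₂ W₃ : Matrix (Fin n) (Fin n) ℝ,
        Ptil i * (P j)⁻¹ * W₁ * ((P j)⁻¹ * Ptil i)
        - (Ptil i * (P j)⁻¹ * W₂ * ((P j)⁻¹ * Ptil i)
          + Ptil i * (P j)⁻¹ * W₃ * ((P j)⁻¹ * Ptil i))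
        = Ptil i * (P j)⁻¹ * (W₁ - W₂ - W₃) * ((P j)⁻¹ * Ptil i) := by
      intro W₁ W₂ W₃
      noncomm_ring
    have hQ' : Ptil i * (P j)⁻¹ * Q * (P j)⁻¹ * Ptil i
        = Ptil i * (P j)⁻¹ * Q * ((P j)⁻¹ * Ptil i) := by rw [mul_assoc]
    have hP' : Ptil i * (P j)⁻¹ * Ptil i
        = Ptil i * (P j)⁻¹ * (P j) * ((P j)⁻¹ * Ptil i) := by
      rw [mul_assoc (Ptil i * (P j)⁻¹) (P j),
        Matrix.mul_nonsing_inv_cancel_left _ _ (hPdet j), mul_assoc]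
    have hMstruct : M j * S j * (((K j)⁻¹ * Aᵀ) * ((P j)⁻¹ * Ptil i))
        = Ptil i * (P j)⁻¹ * ((A * (K j)⁻¹) * S j * ((K j)⁻¹ * Aᵀ)) * ((P j)⁻¹ * Ptil i) := by
      rw [hMj j]
      noncomm_ring
    rw [hQ', hP', hconj, key j, hMstruct]
  -- assemble
  have hfinal : Ptil i - (∑ j, Atil i j * Ptil j * (Atil i j)ᵀ
      + ∑ j, L i j • (Ptil i * (P j)⁻¹ * Q * (P j)⁻¹ * Ptil i))
      = ∑ j, L i j • (M j * S j * (M j)ᵀ) := by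
    rw [← Finset.sum_add_distrib]
    nth_rewrite 1 [hexpand]
    rw [← Finset.sum_sub_distrib]
    exact Finset.sum_congr rfl fun j _ => hterm j
  rw [hfinal]
  exact psd_sum' _ _ fun j _ => psd_smul' (psd_conj' (hSpsd j) (M j)) (hLnonneg i j)
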